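/- Let 0 < p < 1/2. There exists a constant C > 0 such that for every n ≥ 1 and every word w ∈ {1,2,3}ⁿ, the operator norm of the product satisfies ‖C_w‖ ≤ C · (max{2p, 1−2p})ⁿ. -/

import Mathlib

open Matrix MeasureTheory Filter
open scoped ENNReal

noncomputable section

abbrev E3 : Type := EuclideanSpace ℝ (Fin 3)
abbrev Mat3 : Type := Matrix (Fin 3) (Fin 3) ℝ

/-- The action of a matrix on Euclidean 3-space. -/
noncomputable def matApply (A : Mat3) (x : E3) : E3 := Matrix.toEuclideanCLM (𝕜 := ℝ) A x

/-- The largest singular value `α₁(A) = ‖A‖` (Euclidean operator norm). -/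
noncomputable def sv1 (A : Mat3) : ℝ := ‖Matrix.toEuclideanCLM (𝕜 := ℝ) A‖

/-- The smallest singular value `α₃(A) = ‖A⁻¹‖⁻¹`. -/
noncomputable def sv3 (A : Mat3) : ℝ := (‖Matrix.toEuclideanCLM (𝕜 := ℝ) A⁻¹‖)⁻¹

/-- The middle singular value `α₂(A) = |det A| / (α₁(A) α₃(A))`. -/
noncomputable def sv2 (A : Mat3) : ℝ := |A.det| / (sv1 A * sv3 A)

/-- Falconer's singular value function `φ^s(A)`. -/
noncomputable def svf (s : ℝ) (A : Mat3) : ℝ :=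
  if s ≤ 1 then (sv1 A) ^ s
  else if s ≤ 2 then sv1 A * (sv2 A) ^ (s - 1)
  else if s ≤ 3 then sv1 A * sv2 A * (sv3 A) ^ (s - 2)
  else (sv1 A * sv2 A * sv3 A) ^ (s / 3)

/-- The three matrices `C₁, C₂, C₃` (with 0-based indexing). -/
def Cmat (p : ℝ) : Fin 3 → Mat3 :=
  ![!![1 - 2*p, -p, -p; 0, p, 0; 0, 0, p],
    !![p, 0, 0; -p, 1 - 2*p, -p; 0, 0, p],
    !![p, 0, 0; 0, p, 0; -p, -p, 1 - 2*p]]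

/-- The product `C_w = C_{j₁} ⋯ C_{jₙ}` along a word `w = (j₁, …, jₙ)`. -/
noncomputable def Cword (p : ℝ) {n : ℕ} (w : Fin n → Fin 3) : Mat3 :=
  ((List.ofFn w).map (Cmat p)).prod

/-- standard basis vectors of `E3` -/
noncomputable def eVec (i : Fin 3) : E3 := EuclideanSpace.single i 1

/-- The affine map `G_i(x) = C_i x + 2p·e_i`. -/
noncomputable def Gmap (p : ℝ) (i : Fin 3) (x : E3) : E3 :=
  matApply (Cmat p i) x + (2 * p) • eVec i

/-- The composition `G_w = G_{j₁} ∘ ⋯ ∘ G_{jₙ}` along a word `w = (j₁, …, jₙ)`. -/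
noncomputable def Gword (p : ℝ) {n : ℕ} (w : Fin n → Fin 3) : E3 → E3 :=
  ((List.ofFn w).map (Gmap p)).foldr (· ∘ ·) id

/-- Summability of the double series `Σ_{n=1}^∞ Σ_{w ∈ {1,2,3}ⁿ} φ^s(C_w)`
(all terms are nonnegative, so summability is equivalent to finiteness of the sum). -/
def seriesSummable (p s : ℝ) : Prop :=
  Summable (fun x : Σ n : ℕ, (Fin (n+1) → Fin 3) => svf s (Cword p x.2))

/-- The affinity dimension `s₀ = inf{s > 0 : Σ_n Σ_w φ^s(C_w) < ∞}`. -/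
noncomputable def s0 (p : ℝ) : ℝ := sInf {s : ℝ | 0 < s ∧ seriesSummable p s}

/-- The minimal number of balls of radius `δ` needed to cover `A`. -/
noncomputable def coverNum (A : Set E3) (δ : ℝ) : ℕ :=
  sInf {n : ℕ | ∃ t : Finset E3, t.card = n ∧ A ⊆ ⋃ x ∈ t, Metric.ball x δ}

/-- The upper box-counting dimension `limsup_{δ→0⁺} log N_δ(A) / (−log δ)`. -/
noncomputable def upperBoxDim (A : Set E3) : ℝ :=
  Filter.limsup (fun δ : ℝ => Real.log (coverNum A δ) / (-Real.log δ))
    (nhdsWithin 0 (Set.Ioi 0))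

/-- The vector `(1,1,1)`. -/
noncomputable def onesVec : E3 := (WithLp.equiv 2 (Fin 3 → ℝ)).symm ![1, 1, 1]

/-- Orthogonal projection of `ℝ³` onto the plane `V = {x : x₁ + x₂ + x₃ = 0}`. -/
noncomputable def projV (x : E3) : E3 := x - (((x 0) + (x 1) + (x 2)) / 3) • onesVec

/-- The vector `(a,b,c)` in `E3`. -/
noncomputable def vec3 (a b c : ℝ) : E3 := (WithLp.equiv 2 (Fin 3 → ℝ)).symm ![a, b, c]

/-- The triangle `T₀ = conv{e₁, e₂, e₃}`. -/
noncomputable def T0set : Set E3 := convexHull ℝ {eVec 0, eVec 1, eVec 2}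

/-- The standard tetrahedron `W = conv{0, e₁, e₂, e₃}`. -/
noncomputable def Wset : Set E3 := convexHull ℝ {0, eVec 0, eVec 1, eVec 2}

/-- The triangle `T_ε = conv{(1−2ε,ε,ε), (ε,1−2ε,ε), (ε,ε,1−2ε)}`. -/
noncomputable def Ttri (ε : ℝ) : Set E3 :=
  convexHull ℝ {vec3 (1 - 2*ε) ε ε, vec3 ε (1 - 2*ε) ε, vec3 ε ε (1 - 2*ε)}


/-- max absolute column sums: the ℓ¹→ℓ¹ operator norm -/
noncomputable def colNorm (A : Mat3) : ℝ :=
  Finset.univ.sup' Finset.univ_nonempty (fun j : Fin 3 => ∑ i, |A i j|)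

lemma colsum_le_colNorm (A : Mat3) (j : Fin 3) : (∑ i, |A i j|) ≤ colNorm A :=
  Finset.le_sup' (fun j : Fin 3 => ∑ i, |A i j|) (Finset.mem_univ j)

lemma colNorm_le (A : Mat3) {c : ℝ} (h : ∀ j, (∑ i, |A i j|) ≤ c) : colNorm A ≤ c :=
  Finset.sup'_le _ _ (fun j _ => h j)

lemma colNorm_nonneg (A : Mat3) : 0 ≤ colNorm A :=
  le_trans (Finset.sum_nonneg fun _ _ => abs_nonneg _) (colsum_le_colNorm A 0)

lemma entry_le_colNorm (A : Mat3) (i j : Fin 3) : |A i j| ≤ colNorm A :=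
  le_trans (Finset.single_le_sum (f := fun i => |A i j|) (fun _ _ => abs_nonneg _)
    (Finset.mem_univ i)) (colsum_le_colNorm A j)

lemma colNorm_mul (A B : Mat3) : colNorm (A * B) ≤ colNorm A * colNorm B := by
  apply colNorm_le
  intro k
  calc ∑ i, |(A * B) i k| ≤ ∑ i, ∑ j, |A i j| * |B j k| := by
        refine Finset.sum_le_sum fun i _ => ?_
        rw [Matrix.mul_apply]
        refine le_trans (Finset.abs_sum_le_sum_abs _ _) ?_
        simp [abs_mul]
    _ = ∑ j, (∑ i, |A i j|) * |B j k| := by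
        rw [Finset.sum_comm]; simp [Finset.sum_mul]
    _ ≤ ∑ j, colNorm A * |B j k| := by
        refine Finset.sum_le_sum fun j _ => ?_
        exact mul_le_mul_of_nonneg_right (colsum_le_colNorm A j) (abs_nonneg _)
    _ = colNorm A * ∑ j, |B j k| := by rw [Finset.mul_sum]
    _ ≤ colNorm A * colNorm B :=
        mul_le_mul_of_nonneg_left (colsum_le_colNorm B k) (colNorm_nonneg A)

lemma colNorm_one : colNorm (1 : Mat3) ≤ 1 := by
  apply colNorm_le
  intro j
  fin_cases j <;> simp [Fin.sum_univ_three, Matrix.one_apply]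

lemma colNorm_list_prod (r : ℝ) (hr : 0 ≤ r) :
    ∀ (l : List Mat3), (∀ A ∈ l, colNorm A ≤ r) → colNorm l.prod ≤ r ^ l.length := by
  intro l
  induction l with
  | nil => intro _; simpa using colNorm_one
  | cons A t ih =>
    intro h
    have hA : colNorm A ≤ r := h A List.mem_cons_self
    have ht : colNorm t.prod ≤ r ^ t.length := ih fun B hB => h B (List.mem_cons_of_mem _ hB)
    calc colNorm (A :: t).prod = colNorm (A * t.prod) := by rw [List.prod_cons]
      _ ≤ colNorm A * colNorm t.prod := colNorm_mul _ _
      _ ≤ r * r ^ t.length := mul_le_mul hA ht (colNorm_nonneg _) hr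
      _ = r ^ (A :: t).length := by rw [List.length_cons, pow_succ']

lemma colNorm_Cmat (p : ℝ) (hp0 : 0 < p) (hp1 : p < 1/2) (i : Fin 3) :
    colNorm (Cmat p i) ≤ max (2*p) (1 - 2*p) := by
  have h1 : |p| = p := abs_of_pos hp0
  have h2 : |1 - 2*p| = 1 - 2*p := abs_of_pos (by linarith)
  apply colNorm_le
  intro j
  fin_cases i <;> fin_cases j <;>
    simp [Cmat, Fin.sum_univ_three, h1, h2, Matrix.vecHead, Matrix.vecTail, le_sup_iff] <;>
    first
    | (left; linarith)
    | (right; linarith)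
    | linarith

lemma sv1_le_colNorm (A : Mat3) : sv1 A ≤ 9 * colNorm A := by
  set M := colNorm A with hM
  have hM0 : 0 ≤ M := colNorm_nonneg A
  apply ContinuousLinearMap.opNorm_le_bound _ (by linarith)
  intro x
  set y : EuclideanSpace ℝ (Fin 3) := Matrix.toEuclideanCLM (𝕜 := ℝ) A x with hy
  have hyc : ∀ i, y i = ∑ j, A i j * x j := fun i => rfl
  have hxj : ∀ j : Fin 3, |x j| ≤ ‖x‖ := by
    intro j
    rw [EuclideanSpace.norm_eq, ← Real.sqrt_sq (abs_nonneg (x j))]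
    apply Real.sqrt_le_sqrt
    rw [sq_abs]
    calc x j ^ 2 = ‖x j‖ ^ 2 := by rw [Real.norm_eq_abs, sq_abs]
      _ ≤ ∑ i, ‖x i‖ ^ 2 := Finset.single_le_sum
          (f := fun i => ‖x i‖ ^ 2) (fun i _ => sq_nonneg _) (Finset.mem_univ j)
  have hyi : ∀ i, |y i| ≤ 3 * M * ‖x‖ := by
    intro i
    rw [hyc i]
    refine le_trans (Finset.abs_sum_le_sum_abs _ _) ?_
    have hterm : ∀ j : Fin 3, |A i j * x j| ≤ M * ‖x‖ := fun j => by
      rw [abs_mul]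
      exact mul_le_mul (entry_le_colNorm A i j) (hxj j) (abs_nonneg _) hM0
    calc ∑ j, |A i j * x j| ≤ ∑ _j : Fin 3, M * ‖x‖ := Finset.sum_le_sum fun j _ => hterm j
      _ = 3 * M * ‖x‖ := by simp; ring
  have hnorm : ‖y‖ ≤ |y 0| + |y 1| + |y 2| := by
    rw [EuclideanSpace.norm_eq, Fin.sum_univ_three]
    rw [← Real.sqrt_sq (by positivity : (0:ℝ) ≤ |y 0| + |y 1| + |y 2|)]
    apply Real.sqrt_le_sqrt
    simp only [Real.norm_eq_abs]
    nlinarith [abs_nonneg (y 0), abs_nonneg (y 1), abs_nonneg (y 2),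
      sq_abs (y 0), sq_abs (y 1), sq_abs (y 2),
      mul_nonneg (abs_nonneg (y 0)) (abs_nonneg (y 1)),
      mul_nonneg (abs_nonneg (y 0)) (abs_nonneg (y 2)),
      mul_nonneg (abs_nonneg (y 1)) (abs_nonneg (y 2))]
  calc ‖y‖ ≤ |y 0| + |y 1| + |y 2| := hnorm
    _ ≤ 3 * M * ‖x‖ + 3 * M * ‖x‖ + 3 * M * ‖x‖ := by
        have := hyi 0; have := hyi 1; have := hyi 2; linarith
    _ = 9 * M * ‖x‖ := by ring

/-- Lemma (exponential contraction of the matrix products). -/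
theorem norm_Cword_le (p : ℝ) (hp0 : 0 < p) (hp1 : p < 1/2) :
    ∃ C : ℝ, 0 < C ∧ ∀ n : ℕ, 1 ≤ n → ∀ w : Fin n → Fin 3,
      sv1 (Cword p w) ≤ C * (max (2*p) (1 - 2*p)) ^ n := by
  refine ⟨9, by norm_num, ?_⟩
  intro n hn w
  set r := max (2*p) (1 - 2*p) with hr
  have hr0 : 0 ≤ r := le_trans (by linarith) (le_max_left _ _)
  have hcol : colNorm (Cword p w) ≤ r ^ n := by
    have hlen : ((List.ofFn w).map (Cmat p)).length = n := by simp
    have := colNorm_list_prod r hr0 ((List.ofFn w).map (Cmat p)) ?_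
    · rw [hlen] at this; exact this
    · intro A hA
      simp only [List.mem_map] at hA
      obtain ⟨i, _, rfl⟩ := hA
      exact colNorm_Cmat p hp0 hp1 _
  calc sv1 (Cword p w) ≤ 9 * colNorm (Cword p w) := sv1_le_colNorm _
    _ ≤ 9 * r ^ n := by linarith
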